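/- arXiv:math/0509678 — 2 statements merged into one kernel-verified Lean document; each statement's English description precedes it below -/
import Mathlib

section
/- The relation ∼ is a congruence on the sandwich semigroup (IS_n, *): it is an equivalence relation, and if a ∼ a₁ and b ∼ b₁ then a * b ∼ a₁ * b₁ (in fact a * b = a₁ * b₁). -/
open Equiv

/-- `IS n` : the symmetric inverse semigroup on `{1,…,n}`, modeled as partial
equivalences of `Fin n`.  Composition is left-to-right: `(x.trans y) t = y (x t)`. -/
abbrev IS (n : ℕ) := PEquiv (Fin n) (Fin n)

/-- The domain of a partial injective transformation. -/
def sdom {n : ℕ} (x : IS n) : Set (Fin n) := {a | (x a).isSome}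

/-- The image of a partial injective transformation. -/
def sim {n : ℕ} (x : IS n) : Set (Fin n) := {b | (x.symm b).isSome}

/-- The rank of a partial injective transformation: the cardinality of its image. -/
noncomputable def srank {n : ℕ} (x : IS n) : ℕ := Nat.card (sim x)

/-- The set `A = {1,…,k}` inside `Fin n`, i.e. the first `k` elements. -/
def SetA (n k : ℕ) : Set (Fin n) := {i | (i : ℕ) < k}

/-- The idempotent `e` acting identically on `A`, with `dom e = im e = A`. -/
def sandE (n k : ℕ) : IS n where
  toFun i := if (i : ℕ) < k then some i else none
  invFun i := if (i : ℕ) < k then some i else none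
  inv a b := by
    try dsimp only
    split_ifs with h1 h2 <;>
      simp_all [Option.mem_def, eq_comm] <;> rintro rfl <;> omega

/-- The sandwich multiplication `x * y = x e y` (left-to-right composition). -/
def smul (n k : ℕ) (x y : IS n) : IS n := (x.trans (sandE n k)).trans y

/-- `a` is decomposable in `(IS_n, *)` if `a = b * c` for some `b, c`. -/
def Decomp (n k : ℕ) (a : IS n) : Prop := ∃ b c : IS n, smul n k b c = a

/-- `M₁(a) = {x ∈ dom a : x ∈ A, a x ∈ A}`. -/
def M1 (n k : ℕ) (a : IS n) : Set (Fin n) :=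
  {x | x ∈ SetA n k ∧ ∃ y ∈ SetA n k, a x = some y}

/-- `M₂(a) = {x ∈ dom a : x ∈ A, a x ∈ Ā}`. -/
def M2 (n k : ℕ) (a : IS n) : Set (Fin n) :=
  {x | x ∈ SetA n k ∧ ∃ y, y ∉ SetA n k ∧ a x = some y}

/-- `M₃(a) = {x ∈ dom a : x ∈ Ā, a x ∈ A}`. -/
def M3 (n k : ℕ) (a : IS n) : Set (Fin n) :=
  {x | x ∉ SetA n k ∧ ∃ y ∈ SetA n k, a x = some y}

/-- The relation `∼` : for indecomposable `a, b`, `a ∼ b` iff `Mᵢ(a) = Mᵢ(b)` for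
`i = 1,2,3` and `a x = b x` on `M₁(a) ∪ M₂(a) ∪ M₃(a)`; if `a` or `b` is
decomposable, `a ∼ b` iff `a = b`. -/
def SimRel (n k : ℕ) (a b : IS n) : Prop :=
  (¬ Decomp n k a ∧ ¬ Decomp n k b ∧ M1 n k a = M1 n k b ∧ M2 n k a = M2 n k b ∧
    M3 n k a = M3 n k b ∧ ∀ x ∈ M1 n k a ∪ M2 n k a ∪ M3 n k a, a x = b x)
  ∨ ((Decomp n k a ∨ Decomp n k b) ∧ a = b)

lemma transE_apply {n k : ℕ} (a : IS n) (x : Fin n) :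
    (a.trans (sandE n k)) x = (a x).bind (sandE n k) := rfl

lemma etrans_apply {n k : ℕ} (b : IS n) (x : Fin n) :
    ((sandE n k).trans b) x = ((sandE n k) x).bind b := rfl

lemma sandE_apply (n k : ℕ) (x : Fin n) :
    (sandE n k) x = if (x : ℕ) < k then some x else none := rfl

lemma key_left {n k : ℕ} {a a₁ : IS n} (h : SimRel n k a a₁) :
    a.trans (sandE n k) = a₁.trans (sandE n k) := by
  rcases h with ⟨_, _, h1, _, h3, hv⟩ | ⟨_, rfl⟩
  · ext x
    rw [transE_apply, transE_apply]
    by_cases H : ∃ z ∈ SetA n k, a x = some z ∨ a₁ x = some z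
    · obtain ⟨z, hz, hcase⟩ := H
      have hmem : x ∈ M1 n k a ∪ M2 n k a ∪ M3 n k a := by
        rcases hcase with hc | hc
        · by_cases hx : x ∈ SetA n k
          · exact Or.inl (Or.inl ⟨hx, z, hz, hc⟩)
          · exact Or.inr ⟨hx, z, hz, hc⟩
        · by_cases hx : x ∈ SetA n k
          · exact Or.inl (Or.inl (h1 ▸ (⟨hx, z, hz, hc⟩ : x ∈ M1 n k a₁)))
          · exact Or.inr (h3 ▸ (⟨hx, z, hz, hc⟩ : x ∈ M3 n k a₁))
      rw [hv x hmem]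
    · push_neg at H
      have e1 : (a x).bind (sandE n k) = none := by
        cases ha : a x with
        | none => rfl
        | some z =>
          have hz : ¬ (z : ℕ) < k := fun hlt => (H z hlt).1 ha
          simp [Option.bind, sandE_apply, hz]
      have e2 : (a₁ x).bind (sandE n k) = none := by
        cases ha : a₁ x with
        | none => rfl
        | some z =>
          have hz : ¬ (z : ℕ) < k := fun hlt => (H z hlt).2 ha
          simp [Option.bind, sandE_apply, hz]
      rw [e1, e2]
  · rfl

lemma key_right {n k : ℕ} {b b₁ : IS n} (h : SimRel n k b b₁) :
    (sandE n k).trans b = (sandE n k).trans b₁ := by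
  rcases h with ⟨_, _, h1, h2, _, hv⟩ | ⟨_, rfl⟩
  · ext x
    rw [etrans_apply, etrans_apply, sandE_apply]
    by_cases hx : (x : ℕ) < k
    · simp only [if_pos hx, Option.bind]
      by_cases H : ∃ z, b x = some z ∨ b₁ x = some z
      · obtain ⟨z, hc | hc⟩ := H
        · have hmem : x ∈ M1 n k b ∪ M2 n k b ∪ M3 n k b := by
            by_cases hz : z ∈ SetA n k
            · exact Or.inl (Or.inl ⟨hx, z, hz, hc⟩)
            · exact Or.inl (Or.inr ⟨hx, z, hz, hc⟩)
          rw [hv x hmem]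
        · have hmem : x ∈ M1 n k b ∪ M2 n k b ∪ M3 n k b := by
            by_cases hz : z ∈ SetA n k
            · exact Or.inl (Or.inl (h1 ▸ (⟨hx, z, hz, hc⟩ : x ∈ M1 n k b₁)))
            · exact Or.inl (Or.inr (h2 ▸ (⟨hx, z, hz, hc⟩ : x ∈ M2 n k b₁)))
          rw [hv x hmem]
      · push_neg at H
        have e1 : b x = none := by
          cases hb : b x with
          | none => rfl
          | some z => exact absurd hb (H z).1
        have e2 : b₁ x = none := by
          cases hb : b₁ x with
          | none => rfl
          | some z => exact absurd hb (H z).2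
        rw [e1, e2]
    · simp [if_neg hx, Option.bind]
  · rfl

lemma smul_congr {n k : ℕ} {a a₁ b b₁ : IS n} (ha : SimRel n k a a₁)
    (hb : SimRel n k b b₁) : smul n k a b = smul n k a₁ b₁ := by
  unfold smul
  rw [PEquiv.trans_assoc, PEquiv.trans_assoc, key_right hb, ← PEquiv.trans_assoc,
    key_left ha, PEquiv.trans_assoc]

/-- `∼` is a congruence on `(IS_n, *)`: it is an equivalence
relation, and `a ∼ a₁`, `b ∼ b₁` imply `a * b ∼ a₁ * b₁` (in fact equality). -/
theorem simRel_is_congruence (n k : ℕ) (hk : 1 ≤ k) (hkn : k ≤ n) :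
    Equivalence (SimRel n k) ∧
    ∀ a a₁ b b₁ : IS n, SimRel n k a a₁ → SimRel n k b b₁ →
      smul n k a b = smul n k a₁ b₁ ∧
      SimRel n k (smul n k a b) (smul n k a₁ b₁) := by
  constructor
  · refine ⟨fun a => ?_, fun {a b} h => ?_, fun {a b c} hab hbc => ?_⟩
    · by_cases h : Decomp n k a
      · exact Or.inr ⟨Or.inl h, rfl⟩
      · exact Or.inl ⟨h, h, rfl, rfl, rfl, fun _ _ => rfl⟩
    · rcases h with ⟨ha, hb, h1, h2, h3, hv⟩ | ⟨hd, rfl⟩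
      · exact Or.inl ⟨hb, ha, h1.symm, h2.symm, h3.symm,
          fun x hx => (hv x (by rw [h1, h2, h3]; exact hx)).symm⟩
      · exact Or.inr ⟨hd.symm, rfl⟩
    · rcases hbc with ⟨hb, hc, h1', h2', h3', hv'⟩ | ⟨_, rfl⟩
      · rcases hab with ⟨ha, _, h1, h2, h3, hv⟩ | ⟨hd, rfl⟩
        · exact Or.inl ⟨ha, hc, h1.trans h1', h2.trans h2', h3.trans h3',
            fun x hx => (hv x hx).trans (hv' x (by rw [← h1, ← h2, ← h3]; exact hx))⟩
        · exact Or.inl ⟨hb, hc, h1', h2', h3', hv'⟩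
      · exact hab
  · intro a a₁ b b₁ ha hb
    have heq := smul_congr ha hb
    exact ⟨heq, Or.inr ⟨Or.inl ⟨a, b, rfl⟩, heq⟩⟩
end

section
/- Let σ be a semigroup automorphism of (IS_n, *), and let g ∈ S(A), h₁, h₂ ∈ S(Ā) be such that σ([s ↦ t]) = [(g⋈h₁)(s) ↦ (g⋈h₂)(t)] for all s, t ∈ N. Then for every a ∈ IS_n: M₁(σ(a)) = g(M₁(a)) with σ(a)(g(x)) = g(a(x)) for all x ∈ M₁(a); M₂(σ(a)) = g(M₂(a)) with σ(a)(g(x)) = h₂(a(x)) for all x ∈ M₂(a); and M₃(σ(a)) = h₁(M₃(a)) with σ(a)(h₁(x)) = g(a(x)) for all x ∈ M₃(a). -/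
open Equiv

/-- `g⋈h` : the permutation of `Fin n` acting as `g` on `A` and as `h` on `Ā`. -/
def bowtie {n : ℕ} (k : ℕ) (g : Perm {x : Fin n // (x : ℕ) < k})
    (h : Perm {x : Fin n // ¬ (x : ℕ) < k}) : Perm (Fin n) :=
  Equiv.Perm.subtypeCongr g h

/-- `τ_(g,h₁,h₂) : a ↦ (g⋈h₁)⁻¹ · a · (g⋈h₂)` (ordinary, left-to-right, composition). -/
def tauMap {n : ℕ} (k : ℕ) (g : Perm {x : Fin n // (x : ℕ) < k})
    (h₁ h₂ : Perm {x : Fin n // ¬ (x : ℕ) < k}) (a : IS n) : IS n :=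
  ((bowtie k g h₁).symm.toPEquiv.trans a).trans (bowtie k g h₂).toPEquiv

section AuxLemmas

variable {n k : ℕ}

lemma bowtie_lt_iff (g : Perm {x : Fin n // (x : ℕ) < k})
    (h : Perm {x : Fin n // ¬ (x : ℕ) < k}) (x : Fin n) :
    ((bowtie k g h x : Fin n) : ℕ) < k ↔ (x : ℕ) < k := by
  rw [bowtie, Perm.subtypeCongr.apply]
  by_cases hx : (x : ℕ) < k
  · rw [dif_pos hx]
    exact iff_of_true (g ⟨x, hx⟩).2 hx
  · rw [dif_neg hx]
    exact iff_of_false (h ⟨x, hx⟩).2 hx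

lemma bowtie_eq_left (g : Perm {x : Fin n // (x : ℕ) < k})
    (h₁ h₂ : Perm {x : Fin n // ¬ (x : ℕ) < k}) {x : Fin n} (hx : (x : ℕ) < k) :
    bowtie k g h₁ x = bowtie k g h₂ x := by
  rw [bowtie, bowtie, Perm.subtypeCongr.apply, Perm.subtypeCongr.apply,
    dif_pos hx, dif_pos hx]

lemma bowtie_symm (g : Perm {x : Fin n // (x : ℕ) < k})
    (h : Perm {x : Fin n // ¬ (x : ℕ) < k}) :
    (bowtie k g h).symm = bowtie k g.symm h.symm :=
  Perm.subtypeCongr.symm g h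

lemma bowtie_symm_lt_iff (g : Perm {x : Fin n // (x : ℕ) < k})
    (h : Perm {x : Fin n // ¬ (x : ℕ) < k}) (x : Fin n) :
    (((bowtie k g h).symm x : Fin n) : ℕ) < k ↔ (x : ℕ) < k := by
  rw [bowtie_symm]; exact bowtie_lt_iff _ _ _

lemma sandE_mem {x : Fin n} (hx : (x : ℕ) < k) : x ∈ sandE n k x := by
  show sandE n k x = some x
  show (if (x : ℕ) < k then some x else none) = some x
  rw [if_pos hx]

lemma smul_single_eq {s x : Fin n} (hx : (x : ℕ) < k) (a : IS n) :
    smul n k (PEquiv.single s x) a = (PEquiv.single s x).trans a := by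
  unfold smul
  rw [PEquiv.single_trans_of_mem s (sandE_mem hx)]

lemma smul_right_eq {y t : Fin n} (hy : (y : ℕ) < k) (a : IS n) :
    smul n k a (PEquiv.single y t) = a.trans (PEquiv.single y t) := by
  unfold smul
  rw [PEquiv.trans_assoc, PEquiv.trans_single_of_mem t (sandE_mem hy)]

lemma keyL_fwd (σ : Equiv.Perm (IS n))
    (hσ : ∀ x y : IS n, σ (smul n k x y) = smul n k (σ x) (σ y))
    (g : Perm {x : Fin n // (x : ℕ) < k})
    (h₁ h₂ : Perm {x : Fin n // ¬ (x : ℕ) < k})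
    (hform : ∀ s t : Fin n, σ (PEquiv.single s t) =
      PEquiv.single (bowtie k g h₁ s) (bowtie k g h₂ t))
    {a : IS n} {x y : Fin n} (hx : (x : ℕ) < k) (hxy : a x = some y) :
    σ a (bowtie k g h₁ x) = some (bowtie k g h₂ y) := by
  have hGx : ((bowtie k g h₁ x : Fin n) : ℕ) < k := (bowtie_lt_iff g h₁ x).2 hx
  have e1 : smul n k (PEquiv.single x x) a = PEquiv.single x y := by
    rw [smul_single_eq hx, PEquiv.single_trans_of_mem x (Option.mem_def.2 hxy)]
  have e2 := hσ (PEquiv.single x x) a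
  rw [e1, hform, hform, ← bowtie_eq_left g h₁ h₂ hx, smul_single_eq hGx] at e2
  have e3 : ((PEquiv.single (bowtie k g h₁ x) (bowtie k g h₁ x)).trans (σ a))
      (bowtie k g h₁ x) = some (bowtie k g h₂ y) := by
    rw [← e2, PEquiv.single_apply]
  obtain ⟨b, hb1, hb2⟩ := (PEquiv.trans_eq_some _ _ _ _).1 e3
  rw [PEquiv.single_apply] at hb1
  obtain rfl : bowtie k g h₁ x = b := Option.some.inj hb1
  exact hb2

lemma keyR_fwd (σ : Equiv.Perm (IS n))
    (hσ : ∀ x y : IS n, σ (smul n k x y) = smul n k (σ x) (σ y))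
    (g : Perm {x : Fin n // (x : ℕ) < k})
    (h₁ h₂ : Perm {x : Fin n // ¬ (x : ℕ) < k})
    (hform : ∀ s t : Fin n, σ (PEquiv.single s t) =
      PEquiv.single (bowtie k g h₁ s) (bowtie k g h₂ t))
    {a : IS n} {x y : Fin n} (hy : (y : ℕ) < k) (hxy : a x = some y) :
    σ a (bowtie k g h₁ x) = some (bowtie k g h₁ y) := by
  have hGy : ((bowtie k g h₁ y : Fin n) : ℕ) < k := (bowtie_lt_iff g h₁ y).2 hy
  have e1 : smul n k a (PEquiv.single y y) = PEquiv.single x y := by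
    rw [smul_right_eq hy, PEquiv.trans_single_of_mem y (Option.mem_def.2 hxy)]
  have e2 := hσ a (PEquiv.single y y)
  rw [e1, hform, hform, smul_right_eq hGy] at e2
  have e3 : ((σ a).trans (PEquiv.single (bowtie k g h₁ y) (bowtie k g h₂ y)))
      (bowtie k g h₁ x) = some (bowtie k g h₂ y) := by
    rw [← e2, PEquiv.single_apply]
  obtain ⟨b, hb1, hb2⟩ := (PEquiv.trans_eq_some _ _ _ _).1 e3
  have hb : b = bowtie k g h₁ y := by
    by_contra hne
    rw [PEquiv.single_apply_of_ne (fun h => hne h.symm)] at hb2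
    cases hb2
  rw [hb] at hb1
  exact hb1

lemma hσ_symm (σ : Equiv.Perm (IS n))
    (hσ : ∀ x y : IS n, σ (smul n k x y) = smul n k (σ x) (σ y)) :
    ∀ x y : IS n, σ.symm (smul n k x y) = smul n k (σ.symm x) (σ.symm y) := by
  intro u v
  apply σ.injective
  rw [Equiv.apply_symm_apply, hσ, Equiv.apply_symm_apply, Equiv.apply_symm_apply]

lemma hform_symm (σ : Equiv.Perm (IS n))
    (g : Perm {x : Fin n // (x : ℕ) < k})
    (h₁ h₂ : Perm {x : Fin n // ¬ (x : ℕ) < k})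
    (hform : ∀ s t : Fin n, σ (PEquiv.single s t) =
      PEquiv.single (bowtie k g h₁ s) (bowtie k g h₂ t)) :
    ∀ s t : Fin n, σ.symm (PEquiv.single s t) =
      PEquiv.single (bowtie k g.symm h₁.symm s) (bowtie k g.symm h₂.symm t) := by
  intro s t
  rw [Equiv.symm_apply_eq, hform, ← bowtie_symm, ← bowtie_symm,
    Equiv.apply_symm_apply, Equiv.apply_symm_apply]

lemma keyL_bwd (σ : Equiv.Perm (IS n))
    (hσ : ∀ x y : IS n, σ (smul n k x y) = smul n k (σ x) (σ y))
    (g : Perm {x : Fin n // (x : ℕ) < k})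
    (h₁ h₂ : Perm {x : Fin n // ¬ (x : ℕ) < k})
    (hform : ∀ s t : Fin n, σ (PEquiv.single s t) =
      PEquiv.single (bowtie k g h₁ s) (bowtie k g h₂ t))
    {a : IS n} {x y : Fin n} (hx : (x : ℕ) < k)
    (h : σ a (bowtie k g h₁ x) = some (bowtie k g h₂ y)) : a x = some y := by
  have hGx : ((bowtie k g h₁ x : Fin n) : ℕ) < k := (bowtie_lt_iff g h₁ x).2 hx
  have := keyL_fwd σ.symm (hσ_symm σ hσ) g.symm h₁.symm h₂.symm
    (hform_symm σ g h₁ h₂ hform) (a := σ a) hGx h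
  rwa [Equiv.symm_apply_apply, ← bowtie_symm, ← bowtie_symm,
    Equiv.symm_apply_apply, Equiv.symm_apply_apply] at this

lemma keyR_bwd (σ : Equiv.Perm (IS n))
    (hσ : ∀ x y : IS n, σ (smul n k x y) = smul n k (σ x) (σ y))
    (g : Perm {x : Fin n // (x : ℕ) < k})
    (h₁ h₂ : Perm {x : Fin n // ¬ (x : ℕ) < k})
    (hform : ∀ s t : Fin n, σ (PEquiv.single s t) =
      PEquiv.single (bowtie k g h₁ s) (bowtie k g h₂ t))
    {a : IS n} {x y : Fin n} (hy : (y : ℕ) < k)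
    (h : σ a (bowtie k g h₁ x) = some (bowtie k g h₁ y)) : a x = some y := by
  have hGy : ((bowtie k g h₁ y : Fin n) : ℕ) < k := (bowtie_lt_iff g h₁ y).2 hy
  have := keyR_fwd σ.symm (hσ_symm σ hσ) g.symm h₁.symm h₂.symm
    (hform_symm σ g h₁ h₂ hform) (a := σ a) hGy h
  rwa [Equiv.symm_apply_apply, ← bowtie_symm,
    Equiv.symm_apply_apply, Equiv.symm_apply_apply] at this

end AuxLemmas

/-- if an automorphism `σ` of `(IS_n, *)` acts on rank-one elements
via `g, h₁, h₂` then for each `a`: `M₁(σ a) = g(M₁ a)` with `σ a (g x) = g (a x)`,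
`M₂(σ a) = g(M₂ a)` with `σ a (g x) = h₂ (a x)`, and `M₃(σ a) = h₁(M₃ a)` with
`σ a (h₁ x) = g (a x)` (here `g⋈h₁` acts as `g` on `A` and `h₁` on `Ā`, etc.). -/
theorem aut_action_on_M_sets (n k : ℕ) (hk : 1 ≤ k) (hkn : k ≤ n)
    (σ : Equiv.Perm (IS n))
    (hσ : ∀ x y : IS n, σ (smul n k x y) = smul n k (σ x) (σ y))
    (g : Perm {x : Fin n // (x : ℕ) < k})
    (h₁ h₂ : Perm {x : Fin n // ¬ (x : ℕ) < k})
    (hform : ∀ s t : Fin n, σ (PEquiv.single s t) =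
      PEquiv.single (bowtie k g h₁ s) (bowtie k g h₂ t)) :
    ∀ a : IS n,
      (M1 n k (σ a) = bowtie k g h₁ '' M1 n k a ∧
        ∀ x ∈ M1 n k a, (σ a) (bowtie k g h₁ x) = (a x).map (bowtie k g h₂)) ∧
      (M2 n k (σ a) = bowtie k g h₁ '' M2 n k a ∧
        ∀ x ∈ M2 n k a, (σ a) (bowtie k g h₁ x) = (a x).map (bowtie k g h₂)) ∧
      (M3 n k (σ a) = bowtie k g h₁ '' M3 n k a ∧
        ∀ x ∈ M3 n k a, (σ a) (bowtie k g h₁ x) = (a x).map (bowtie k g h₂)) := by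
  intro a
  refine ⟨⟨?_, ?_⟩, ⟨?_, ?_⟩, ⟨?_, ?_⟩⟩
  · ext u
    simp only [M1, SetA, Set.mem_setOf_eq, Set.mem_image]
    constructor
    · rintro ⟨hu, v, hv, huv⟩
      refine ⟨(bowtie k g h₁).symm u,
        ⟨(bowtie_symm_lt_iff g h₁ u).2 hu, (bowtie k g h₂).symm v,
          (bowtie_symm_lt_iff g h₂ v).2 hv, ?_⟩, Equiv.apply_symm_apply _ _⟩
      apply keyL_bwd σ hσ g h₁ h₂ hform ((bowtie_symm_lt_iff g h₁ u).2 hu)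
      rwa [Equiv.apply_symm_apply, Equiv.apply_symm_apply]
    · rintro ⟨x, ⟨hx, y, hy, hxy⟩, rfl⟩
      exact ⟨(bowtie_lt_iff g h₁ x).2 hx, bowtie k g h₂ y,
        (bowtie_lt_iff g h₂ y).2 hy, keyL_fwd σ hσ g h₁ h₂ hform hx hxy⟩
  · rintro x ⟨hx, y, _, hxy⟩
    rw [hxy, Option.map_some]
    exact keyL_fwd σ hσ g h₁ h₂ hform hx hxy
  · ext u
    simp only [M2, SetA, Set.mem_setOf_eq, Set.mem_image]
    constructor
    · rintro ⟨hu, v, hv, huv⟩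
      refine ⟨(bowtie k g h₁).symm u,
        ⟨(bowtie_symm_lt_iff g h₁ u).2 hu, (bowtie k g h₂).symm v,
          fun hc => hv ((bowtie_symm_lt_iff g h₂ v).1 hc), ?_⟩,
        Equiv.apply_symm_apply _ _⟩
      apply keyL_bwd σ hσ g h₁ h₂ hform ((bowtie_symm_lt_iff g h₁ u).2 hu)
      rwa [Equiv.apply_symm_apply, Equiv.apply_symm_apply]
    · rintro ⟨x, ⟨hx, y, hy, hxy⟩, rfl⟩
      exact ⟨(bowtie_lt_iff g h₁ x).2 hx, bowtie k g h₂ y,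
        fun hc => hy ((bowtie_lt_iff g h₂ y).1 hc),
        keyL_fwd σ hσ g h₁ h₂ hform hx hxy⟩
  · rintro x ⟨hx, y, _, hxy⟩
    rw [hxy, Option.map_some]
    exact keyL_fwd σ hσ g h₁ h₂ hform hx hxy
  · ext u
    simp only [M3, SetA, Set.mem_setOf_eq, Set.mem_image]
    constructor
    · rintro ⟨hu, v, hv, huv⟩
      refine ⟨(bowtie k g h₁).symm u,
        ⟨fun hc => hu ((bowtie_symm_lt_iff g h₁ u).1 hc),
          (bowtie k g h₁).symm v,
          (bowtie_symm_lt_iff g h₁ v).2 hv, ?_⟩, Equiv.apply_symm_apply _ _⟩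
      apply keyR_bwd σ hσ g h₁ h₂ hform ((bowtie_symm_lt_iff g h₁ v).2 hv)
      rwa [Equiv.apply_symm_apply, Equiv.apply_symm_apply]
    · rintro ⟨x, ⟨hx, y, hy, hxy⟩, rfl⟩
      exact ⟨fun hc => hx ((bowtie_lt_iff g h₁ x).1 hc), bowtie k g h₁ y,
        (bowtie_lt_iff g h₁ y).2 hy, keyR_fwd σ hσ g h₁ h₂ hform hy hxy⟩
  · rintro x ⟨_, y, hy, hxy⟩
    rw [hxy, Option.map_some, ← bowtie_eq_left g h₁ h₂ hy]
    exact keyR_fwd σ hσ g h₁ h₂ hform hy hxy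
end
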